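/- For each multi-index s ∈ F, the interpolation grid Γ_s := {y_{s−e;m} : e ∈ E_s, 0 ≤ m_j ≤ s_j − e_j} satisfies |Γ_s| ≤ ∏_{j∈ℕ} (2 s_j + 1) = p_s(1,2). Consequently, if Λ(ξ) := {s ∈ F : σ_s^q ≤ ξ} for a family (σ_s) with M := ∑_{s∈F} p_s(1,2) σ_s^{-q} < ∞, then the total number of interpolation points satisfies |Γ(Λ(ξ))| ≤ ∑_{s∈Λ(ξ)} p_s(1,2) ≤ M ξ. -/

import Mathlib

/- STATEMENT 14 (grid counting, from the proof of Corollary 3.1 of the paper).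
`Y m k` is the k-th point of the univariate interpolation grid `Y_m`
(for `k ≤ m`).  `gridOfIndex Y s` is the set
`Γ_s = {y_{s−e;m} : e ∈ E_s, 0 ≤ m_j ≤ s_j − e_j}` of points of `ℝ^∞` and
`Γ(Λ) = ⋃_{s∈Λ} Γ_s`; `p_s(1,2) = ∏_j (1+2s_j)` and
`M = ∑_s p_s(1,2) σ_s^{-q}`. -/

noncomputable def pcoef (θ lam : ℝ) (s : ℕ →₀ ℕ) : ℝ :=
  s.prod fun _ n => (1 + lam * n) ^ θ

/-- The interpolation grid `Γ_s` associated with a multi-index `s`. -/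
def gridOfIndex (Y : ℕ → ℕ → ℝ) (s : ℕ →₀ ℕ) : Set (ℕ → ℝ) :=
  {z | ∃ e m : ℕ → ℕ, (∀ j, e j ≤ 1) ∧ (∀ j, s j = 0 → e j = 0) ∧
    (∀ j, m j ≤ s j - e j) ∧ z = fun j => Y (s j - e j) (m j)}

lemma pcoef_eq (s : ℕ →₀ ℕ) :
    pcoef 1 2 s = ∏ j ∈ s.support, (1 + 2 * (s j : ℝ)) := by
  unfold pcoef Finsupp.prod
  exact Finset.prod_congr rfl fun j _ => Real.rpow_one _

lemma one_le_pcoef (s : ℕ →₀ ℕ) : 1 ≤ pcoef 1 2 s := by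
  rw [pcoef_eq]
  calc (1:ℝ) = ∏ _j ∈ s.support, (1:ℝ) := by simp
    _ ≤ ∏ j ∈ s.support, (1 + 2 * (s j : ℝ)) :=
        Finset.prod_le_prod (fun _ _ => zero_le_one)
          (fun j _ => by have : (0:ℝ) ≤ (s j : ℝ) := Nat.cast_nonneg _; linarith)

lemma grid_card (Y : ℕ → ℕ → ℝ) (s : ℕ →₀ ℕ) :
    (gridOfIndex Y s).Finite ∧
      (gridOfIndex Y s).ncard ≤ ∏ j ∈ s.support, (2 * s j + 1) := by
  classical
  let g : ((j : s.support) → Fin (2 * s j.1 + 1)) → (ℕ → ℝ) := fun f j =>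
    if h : j ∈ s.support then
      (if (f ⟨j, h⟩ : ℕ) ≤ s j then Y (s j) (f ⟨j, h⟩)
       else Y (s j - 1) ((f ⟨j, h⟩ : ℕ) - (s j + 1)))
    else Y 0 0
  have hsub : gridOfIndex Y s ⊆ Set.range g := by
    rintro z ⟨e, m, he1, he0, hm, rfl⟩
    have hbound : ∀ j : s.support,
        (if e j.1 = 0 then m j.1 else s j.1 + 1 + m j.1) < 2 * s j.1 + 1 := by
      intro j
      have h1 := he1 j.1
      have h2 := hm j.1
      have h3 : s j.1 ≠ 0 := Finsupp.mem_support_iff.mp j.2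
      split <;> omega
    refine ⟨fun j => ⟨if e j.1 = 0 then m j.1 else s j.1 + 1 + m j.1, hbound j⟩, ?_⟩
    funext j
    by_cases hj : j ∈ s.support
    · have h1 := he1 j
      have h2 := hm j
      simp only [g, dif_pos hj]
      by_cases he : e j = 0
      · simp only [he, if_pos]
        have : m j ≤ s j := by omega
        rw [if_pos this]
        simp [he]
      · have hej : e j = 1 := by omega
        simp only [if_neg he]
        have hns : ¬ (s j + 1 + m j ≤ s j) := by omega
        rw [if_neg hns]
        have : s j + 1 + m j - (s j + 1) = m j := by omega
        rw [this, hej]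
    · have hs0 : s j = 0 := Finsupp.notMem_support_iff.mp hj
      have he : e j = 0 := he0 j hs0
      have hm0 : m j = 0 := by have := hm j; omega
      simp [g, dif_neg hj, hs0, he, hm0]
  have hfin : (Set.range g).Finite := Set.finite_range g
  refine ⟨hfin.subset hsub, ?_⟩
  calc (gridOfIndex Y s).ncard ≤ (Set.range g).ncard := Set.ncard_le_ncard hsub hfin
    _ ≤ Nat.card ((j : s.support) → Fin (2 * s j.1 + 1)) := by
        rw [← Set.image_univ]
        exact (Set.ncard_image_le Set.finite_univ).trans_eq (Set.ncard_univ _)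
    _ = ∏ j ∈ s.support, (2 * s j + 1) := by
        rw [Nat.card_eq_fintype_card, Fintype.card_pi]
        simp [Finset.prod_attach s.support (fun j => 2 * s j + 1)]

theorem stmt14 (Y : ℕ → ℕ → ℝ) (q ξ : ℝ) (hq : 0 < q) (hξ : 0 < ξ)
    (σ : (ℕ →₀ ℕ) → ℝ) (hσ : ∀ s, 0 < σ s)
    (hM : Summable fun s => pcoef 1 2 s * σ s ^ (-q)) :
    (∀ s : ℕ →₀ ℕ, ((gridOfIndex Y s).ncard : ℝ) ≤ pcoef 1 2 s) ∧
    ((⋃ s ∈ {s : ℕ →₀ ℕ | σ s ^ q ≤ ξ}, gridOfIndex Y s).ncard : ℝ) ≤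
      (∑' s : {s : ℕ →₀ ℕ // σ s ^ q ≤ ξ}, pcoef 1 2 s.1) ∧
    (∑' s : {s : ℕ →₀ ℕ // σ s ^ q ≤ ξ}, pcoef 1 2 s.1) ≤
      (∑' s : ℕ →₀ ℕ, pcoef 1 2 s * σ s ^ (-q)) * ξ := by
  classical
  -- Part 1
  have part1 : ∀ s : ℕ →₀ ℕ, ((gridOfIndex Y s).ncard : ℝ) ≤ pcoef 1 2 s := by
    intro s
    have h := (grid_card Y s).2
    calc ((gridOfIndex Y s).ncard : ℝ) ≤ (∏ j ∈ s.support, (2 * s j + 1) : ℕ) := by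
          exact_mod_cast h
      _ = pcoef 1 2 s := by
          rw [pcoef_eq]
          push_cast
          exact Finset.prod_congr rfl fun j _ => by ring
  -- key inequality on Λ
  have hkey : ∀ s : ℕ →₀ ℕ, σ s ^ q ≤ ξ → ξ⁻¹ ≤ σ s ^ (-q) := by
    intro s hs
    have hpos : (0:ℝ) < σ s ^ q := Real.rpow_pos_of_pos (hσ s) q
    rw [Real.rpow_neg (hσ s).le]
    exact inv_anti₀ hpos hs
  have hσnonneg : ∀ s : ℕ →₀ ℕ, (0:ℝ) ≤ σ s ^ (-q) :=
    fun s => (Real.rpow_pos_of_pos (hσ s) _).le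
  have hterm_nonneg : ∀ s, 0 ≤ pcoef 1 2 s * σ s ^ (-q) := fun s =>
    mul_nonneg (le_trans zero_le_one (one_le_pcoef s)) (hσnonneg s)
  -- Λ is finite
  have hΛfin : {s : ℕ →₀ ℕ | σ s ^ q ≤ ξ}.Finite := by
    have hten := hM.tendsto_cofinite_zero
    have hmem : (fun s => pcoef 1 2 s * σ s ^ (-q)) ⁻¹' Set.Iio ξ⁻¹ ∈ Filter.cofinite :=
      hten (Iio_mem_nhds (by positivity))
    rw [Filter.mem_cofinite] at hmem
    refine hmem.subset ?_
    intro s hs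
    simp only [Set.mem_compl_iff, Set.mem_preimage, Set.mem_Iio, not_lt]
    calc ξ⁻¹ ≤ σ s ^ (-q) := hkey s hs
      _ = 1 * σ s ^ (-q) := (one_mul _).symm
      _ ≤ pcoef 1 2 s * σ s ^ (-q) :=
          mul_le_mul_of_nonneg_right (one_le_pcoef s) (hσnonneg s)
  haveI : Fintype {s : ℕ →₀ ℕ // σ s ^ q ≤ ξ} := hΛfin.fintype
  set T : Finset (ℕ →₀ ℕ) := hΛfin.toFinset with hT
  have htsum_eq : (∑' s : {s : ℕ →₀ ℕ // σ s ^ q ≤ ξ}, pcoef 1 2 s.1)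
      = ∑ s ∈ T, pcoef 1 2 s := by
    rw [tsum_fintype]
    exact (Finset.sum_subtype T (fun x => hΛfin.mem_toFinset) (pcoef 1 2)).symm
  -- Part 2
  have part2 : ((⋃ s ∈ {s : ℕ →₀ ℕ | σ s ^ q ≤ ξ}, gridOfIndex Y s).ncard : ℝ) ≤
      (∑' s : {s : ℕ →₀ ℕ // σ s ^ q ≤ ξ}, pcoef 1 2 s.1) := by
    have hU : (⋃ s ∈ {s : ℕ →₀ ℕ | σ s ^ q ≤ ξ}, gridOfIndex Y s)
        = ⋃ s ∈ T, gridOfIndex Y s := by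
      ext z; simp [hT, hΛfin.mem_toFinset]
    rw [hU, htsum_eq]
    have hcard : (⋃ s ∈ T, gridOfIndex Y s).ncard ≤ ∑ s ∈ T, (gridOfIndex Y s).ncard := by
      classical
      induction T using Finset.induction with
      | empty => simp
      | @insert a t hx ih =>
        rw [Finset.set_biUnion_insert, Finset.sum_insert hx]
        exact le_trans (Set.ncard_union_le _ _) (by omega)
    calc ((⋃ s ∈ T, gridOfIndex Y s).ncard : ℝ)
        ≤ ((∑ s ∈ T, (gridOfIndex Y s).ncard : ℕ) : ℝ) := by exact_mod_cast hcard
      _ = ∑ s ∈ T, ((gridOfIndex Y s).ncard : ℝ) := by push_cast; ring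
      _ ≤ ∑ s ∈ T, pcoef 1 2 s := Finset.sum_le_sum fun s _ => part1 s
  -- Part 3
  have part3 : (∑' s : {s : ℕ →₀ ℕ // σ s ^ q ≤ ξ}, pcoef 1 2 s.1) ≤
      (∑' s : ℕ →₀ ℕ, pcoef 1 2 s * σ s ^ (-q)) * ξ := by
    have hstep : (∑' s : {s : ℕ →₀ ℕ // σ s ^ q ≤ ξ}, pcoef 1 2 s.1) ≤
        (∑' s : {s : ℕ →₀ ℕ // σ s ^ q ≤ ξ}, pcoef 1 2 s.1 * σ s.1 ^ (-q)) * ξ := by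
      rw [← tsum_mul_right]
      refine Summable.tsum_le_tsum ?_ (Summable.of_finite) (Summable.of_finite)
      intro s
      calc pcoef 1 2 s.1 = pcoef 1 2 s.1 * (ξ⁻¹ * ξ) := by
            rw [inv_mul_cancel₀ hξ.ne', mul_one]
        _ ≤ pcoef 1 2 s.1 * (σ s.1 ^ (-q) * ξ) := by
            refine mul_le_mul_of_nonneg_left ?_ (le_trans zero_le_one (one_le_pcoef s.1))
            exact mul_le_mul_of_nonneg_right (hkey s.1 s.2) hξ.le
        _ = pcoef 1 2 s.1 * σ s.1 ^ (-q) * ξ := by ring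
    refine hstep.trans (mul_le_mul_of_nonneg_right ?_ hξ.le)
    exact Summable.tsum_subtype_le (fun s => pcoef 1 2 s * σ s ^ (-q)) _ hterm_nonneg hM
  exact ⟨part1, part2, part3⟩
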